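/- Let (Ω, 𝒜, μ) be a finite measure space, φ a Young function, and 𝔇 a σ-subalgebra. If for every f ∈ L^φ(Ω, 𝔇, μ) the conditional expectations E(f | 𝒜ₙ) converge to f in L^φ norm, then the sequence of σ-subalgebras {𝒜ₙ} μ-converges to 𝔇, i.e., for every D ∈ 𝔇 there exist Aₙ ∈ 𝒜ₙ with μ(Aₙ Δ D) → 0. -/

import Mathlib

open MeasureTheory Filter Topology

def IsYoung (φ : ℝ → ℝ) : Prop :=
  ConvexOn ℝ Set.univ φ ∧ Continuous φ ∧ (∀ x, φ (-x) = φ x) ∧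
    (∀ x, φ x = 0 ↔ x = 0) ∧ Tendsto (fun x => φ x / x) atTop atTop

noncomputable def luxNorm {Ω : Type*} {m : MeasurableSpace Ω} (μ : Measure Ω)
    (φ : ℝ → ℝ) (f : Ω → ℝ) : ℝ :=
  sInf {k : ℝ | 0 < k ∧ ∫ x, φ (|f x| / k) ∂μ ≤ 1}

lemma young_nonneg {φ : ℝ → ℝ} (hφ : IsYoung φ) (x : ℝ) : 0 ≤ φ x := by
  have h0 : φ 0 = 0 := (hφ.2.2.2.1 0).mpr rfl
  have := hφ.1.2 (Set.mem_univ x) (Set.mem_univ (-x))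
    (by norm_num : (0:ℝ) ≤ 1/2) (by norm_num : (0:ℝ) ≤ 1/2) (by norm_num)
  simp only [smul_eq_mul, hφ.2.2.1 x] at this
  have hx : (1/2 : ℝ) * x + (1/2) * (-x) = 0 := by ring
  rw [hx, h0] at this
  linarith

lemma young_mono {φ : ℝ → ℝ} (hφ : IsYoung φ) {a b : ℝ} (ha : 0 ≤ a) (hab : a ≤ b) :
    φ a ≤ φ b := by
  have h0 : φ 0 = 0 := (hφ.2.2.2.1 0).mpr rfl
  rcases eq_or_lt_of_le (ha.trans hab) with hb | hb
  · have : a = 0 := le_antisymm (hab.trans hb.symm.le) ha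
    rw [this, ← hb, h0]
  · have ht0 : 0 ≤ a / b := div_nonneg ha hb.le
    have ht1 : a / b ≤ 1 := div_le_one_of_le₀ hab hb.le
    have := hφ.1.2 (Set.mem_univ (0:ℝ)) (Set.mem_univ b)
      (by linarith : (0:ℝ) ≤ 1 - a/b) ht0 (by ring)
    simp only [smul_eq_mul, mul_zero, zero_add, h0, mul_zero, zero_add] at this
    have hab' : a / b * b = a := div_mul_cancel₀ a hb.ne'
    rw [hab'] at this
    calc φ a ≤ a / b * φ b := this
      _ ≤ 1 * φ b := mul_le_mul_of_nonneg_right ht1 (young_nonneg hφ b)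
      _ = φ b := one_mul _

lemma young_atTop {φ : ℝ → ℝ} (hφ : IsYoung φ) : Tendsto φ atTop atTop := by
  apply tendsto_atTop_mono' atTop _ hφ.2.2.2.2
  filter_upwards [eventually_ge_atTop (1:ℝ)] with x hx
  rw [div_le_iff₀ (by linarith : (0:ℝ) < x)]
  nlinarith [young_nonneg hφ x]

lemma indicator_phi_integrable {Ω : Type*} {m0 : MeasurableSpace Ω} (μ : Measure Ω)
    [IsFiniteMeasure μ] {φ : ℝ → ℝ} (hφ : IsYoung φ) {D : Set Ω} (hDm : MeasurableSet D) :
    ∃ α > 0, Integrable (fun x => φ (α * |D.indicator (fun _ => (1:ℝ)) x|)) μ := by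
  have h0 : φ 0 = 0 := (hφ.2.2.2.1 0).mpr rfl
  refine ⟨1, one_pos, ?_⟩
  have : (fun x => φ (1 * |D.indicator (fun _ => (1:ℝ)) x|)) = D.indicator (fun _ => φ 1) := by
    funext x; by_cases hx : x ∈ D <;>
      simp [Set.indicator_of_mem, Set.indicator_of_notMem, hx, h0]
  rw [this]
  exact (integrable_const _).indicator hDm

lemma key_lemma {Ω : Type*} {m0 : MeasurableSpace Ω} (μ : Measure Ω) [IsFiniteMeasure μ]
    {φ : ℝ → ℝ} (hφ : IsYoung φ)
    (𝒜 : ℕ → MeasurableSpace Ω) (h𝒜 : ∀ n, 𝒜 n ≤ m0)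
    {D : Set Ω} (hDm : MeasurableSet D)
    (hL : Tendsto (fun n => luxNorm μ φ
      (fun x => (μ[D.indicator (fun _ => (1:ℝ)) | 𝒜 n]) x - D.indicator (fun _ => (1:ℝ)) x))
      atTop (𝓝 0)) :
    ∃ As : ℕ → Set Ω, (∀ n, MeasurableSet[𝒜 n] (As n)) ∧
      Tendsto (fun n => μ (symmDiff (As n) D)) atTop (𝓝 0) := by
  have h0 : φ 0 = 0 := (hφ.2.2.2.1 0).mpr rfl
  set f : Ω → ℝ := D.indicator (fun _ => 1) with hfdef
  have hf01 : ∀ x, 0 ≤ f x ∧ f x ≤ 1 := by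
    intro x; by_cases hx : x ∈ D <;>
      simp [hfdef, Set.indicator_of_mem, Set.indicator_of_notMem, hx]
  have hfint : Integrable f μ := (integrable_const 1).indicator hDm
  set g : ℕ → Ω → ℝ := fun n x => (μ[f | 𝒜 n]) x - f x with hgdef
  have hgm : ∀ n, Measurable (g n) := by
    intro n
    exact ((stronglyMeasurable_condExp.mono (h𝒜 n)).measurable).sub
      (measurable_const.indicator hDm)
  have hge : ∀ n, ∀ᵐ x ∂μ, |g n x| ≤ 1 := by
    intro n
    have hc0 : 0 ≤ᵐ[μ] μ[f | 𝒜 n] :=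
      condExp_nonneg (Eventually.of_forall fun x => (hf01 x).1)
    have hc1 : μ[f | 𝒜 n] ≤ᵐ[μ] fun _ => (1:ℝ) := by
      have := condExp_mono (m := 𝒜 n) (μ := μ) hfint (integrable_const (1:ℝ))
        (Eventually.of_forall fun x => (hf01 x).2)
      rwa [condExp_const (h𝒜 n) (1:ℝ)] at this
    filter_upwards [hc0, hc1] with x hx0 hx1
    have hx0' : (0:ℝ) ≤ (μ[f | 𝒜 n]) x := hx0
    obtain ⟨hf0, hf1⟩ := hf01 x
    rw [abs_le]
    exact ⟨by simp only [hgdef]; linarith, by simp only [hgdef]; linarith⟩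
  have hgint : ∀ n, ∀ k : ℝ, 0 < k → Integrable (fun x => φ (|g n x| / k)) μ := by
    intro n k hk
    have hm1 : Measurable fun x => φ (|g n x| / k) :=
      hφ.2.1.measurable.comp ((hgm n).abs.div_const k)
    refine Integrable.mono' (integrable_const (φ (1/k))) hm1.aestronglyMeasurable ?_
    filter_upwards [hge n] with x hx
    rw [Real.norm_eq_abs, abs_of_nonneg (young_nonneg hφ _)]
    exact young_mono hφ (div_nonneg (abs_nonneg _) hk.le) (by gcongr)
  obtain ⟨k₀, hk₀1, hk₀⟩ : ∃ k₀ : ℝ, 1 ≤ k₀ ∧ φ (1/k₀) * (μ Set.univ).toReal ≤ 1 := by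
    have h1 : Tendsto (fun k : ℝ => φ (1/k)) atTop (𝓝 0) := by
      have := (hφ.2.1.tendsto 0).comp tendsto_inv_atTop_zero
      simpa [h0, one_div, Function.comp_def] using this
    have h2 : Tendsto (fun k : ℝ => φ (1/k) * (μ Set.univ).toReal) atTop (𝓝 0) := by
      simpa using h1.mul_const (μ Set.univ).toReal
    have h3 : ∀ᶠ k : ℝ in atTop, φ (1/k) * (μ Set.univ).toReal < 1 :=
      h2.eventually (gt_mem_nhds one_pos)
    obtain ⟨k₀, hk1, hk2⟩ := ((eventually_ge_atTop (1:ℝ)).and h3).exists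
    exact ⟨k₀, hk1, hk2.le⟩
  have hSne : ∀ n, k₀ ∈ {k : ℝ | 0 < k ∧ ∫ x, φ (|g n x| / k) ∂μ ≤ 1} := by
    intro n
    have hk₀pos : (0:ℝ) < k₀ := lt_of_lt_of_le one_pos hk₀1
    refine ⟨hk₀pos, ?_⟩
    calc ∫ x, φ (|g n x| / k₀) ∂μ ≤ ∫ _, φ (1/k₀) ∂μ := by
          refine integral_mono_ae (hgint n k₀ hk₀pos) (integrable_const _) ?_
          filter_upwards [hge n] with x hx
          exact young_mono hφ (div_nonneg (abs_nonneg _) hk₀pos.le) (by gcongr)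
      _ = (μ Set.univ).toReal * φ (1/k₀) := by rw [integral_const, smul_eq_mul]; rfl
      _ ≤ 1 := by rw [mul_comm]; exact hk₀
  refine ⟨fun n => {x | 1/2 < (μ[f | 𝒜 n]) x}, fun n => ?_, ?_⟩
  · exact measurableSet_lt (@measurable_const ℝ Ω _ (𝒜 n) _)
      stronglyMeasurable_condExp.measurable
  have hsub : ∀ n, symmDiff {x | 1/2 < (μ[f | 𝒜 n]) x} D ⊆ {x | 1/2 ≤ |g n x|} := by
    intro n x hx
    rw [Set.mem_symmDiff] at hx
    rcases hx with ⟨hx1, hx2⟩ | ⟨hx1, hx2⟩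
    · have hfx : f x = 0 := Set.indicator_of_notMem hx2 _
      have h1 : (1:ℝ)/2 < (μ[f | 𝒜 n]) x := hx1
      simp only [Set.mem_setOf_eq, hgdef, hfx, sub_zero]
      rw [abs_of_nonneg (by linarith)]; linarith
    · have hfx : f x = 1 := Set.indicator_of_mem hx1 _
      have h1 : ¬ (1:ℝ)/2 < (μ[f | 𝒜 n]) x := hx2
      push_neg at h1
      simp only [Set.mem_setOf_eq, hgdef, hfx]
      rw [abs_of_nonpos (by linarith)]; linarith
  rw [ENNReal.tendsto_nhds_zero]
  intro ε hε
  obtain ⟨ε', hε'pos, hε'le⟩ : ∃ ε' : ℝ, 0 < ε' ∧ ENNReal.ofReal ε' ≤ ε := by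
    rcases eq_or_ne ε ⊤ with h | h
    · exact ⟨1, one_pos, h ▸ le_top⟩
    · exact ⟨ε.toReal, ENNReal.toReal_pos hε.ne' h, by rw [ENNReal.ofReal_toReal h]⟩
  obtain ⟨t, ht1, htφ⟩ : ∃ t : ℝ, 1 ≤ t ∧ 1/ε' ≤ φ t := by
    obtain ⟨t, ht⟩ := (((young_atTop hφ).eventually_ge_atTop (1/ε')).and
      (eventually_ge_atTop (1:ℝ))).exists
    exact ⟨t, ht.2, ht.1⟩
  have htpos : (0:ℝ) < t := lt_of_lt_of_le one_pos ht1
  have hφt : (0:ℝ) < φ t := lt_of_lt_of_le (by positivity) htφ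
  have hev : ∀ᶠ n in atTop,
      luxNorm μ φ (fun x => (μ[f | 𝒜 n]) x - f x) < 1/(2*t) :=
    hL.eventually (gt_mem_nhds (by positivity))
  filter_upwards [hev] with n hn
  have hbdd : BddBelow {k : ℝ | 0 < k ∧ ∫ x, φ (|g n x| / k) ∂μ ≤ 1} :=
    ⟨0, fun k hk => hk.1.le⟩
  have hlt : sInf {k : ℝ | 0 < k ∧ ∫ x, φ (|g n x| / k) ∂μ ≤ 1} < 1/(2*t) := hn
  obtain ⟨k, hkS, hklt⟩ := (csInf_lt_iff hbdd ⟨k₀, hSne n⟩).mp hlt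
  obtain ⟨hkpos, hkint⟩ := hkS
  set s : Set Ω := {x | 1/2 ≤ |g n x|} with hsdef
  have hsm : MeasurableSet s := measurableSet_le measurable_const (hgm n).abs
  have hcheb : φ t * (μ s).toReal ≤ 1 := by
    have h1 : ∫ _ in s, φ t ∂μ ≤ ∫ x in s, φ (|g n x| / k) ∂μ := by
      refine setIntegral_mono_on ((integrableOn_const_iff (by simp)).mpr (Or.inr (measure_lt_top μ s)))
        ((hgint n k hkpos).integrableOn) hsm ?_
      intro x hx
      refine young_mono hφ htpos.le ?_
      have hx' : (1:ℝ)/2 ≤ |g n x| := hx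
      calc t ≤ (1/2) / k := by
            rw [le_div_iff₀ hkpos]
            calc t * k ≤ t * (1/(2*t)) := mul_le_mul_of_nonneg_left hklt.le htpos.le
              _ = 1/2 := by field_simp
        _ ≤ |g n x| / k := by gcongr
    have h2 : ∫ x in s, φ (|g n x| / k) ∂μ ≤ ∫ x, φ (|g n x| / k) ∂μ :=
      setIntegral_le_integral (hgint n k hkpos)
        (Eventually.of_forall fun x => young_nonneg hφ _)
    have h3 : ∫ _ in s, φ t ∂μ = (μ s).toReal * φ t := by
      rw [setIntegral_const, smul_eq_mul]; rfl
    rw [mul_comm, ← h3]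
    exact h1.trans (h2.trans hkint)
  have hμs : (μ s).toReal ≤ ε' := by
    have h1 : (μ s).toReal ≤ 1 / φ t := by
      rw [le_div_iff₀ hφt]; linarith [hcheb]
    have h2 : 1 / φ t ≤ ε' := by
      rw [div_le_iff₀ hφt]
      calc (1:ℝ) = ε' * (1/ε') := by field_simp
        _ ≤ ε' * φ t := by gcongr
    linarith
  calc μ (symmDiff {x | 1/2 < (μ[f | 𝒜 n]) x} D) ≤ μ s := measure_mono (hsub n)
    _ ≤ ENNReal.ofReal ε' := by
        rw [← ENNReal.ofReal_toReal (measure_ne_top μ s)]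
        exact ENNReal.ofReal_le_ofReal hμs
    _ ≤ ε := hε'le

theorem stmt_8 {Ω : Type*} {m0 : MeasurableSpace Ω} (μ : Measure Ω) [IsFiniteMeasure μ]
    (φ : ℝ → ℝ) (hφ : IsYoung φ)
    (𝒜 : ℕ → MeasurableSpace Ω) (h𝒜 : ∀ n, 𝒜 n ≤ m0)
    (𝔇 : MeasurableSpace Ω) (h𝔇 : 𝔇 ≤ m0)
    (hcv : ∀ f : Ω → ℝ, StronglyMeasurable[𝔇] f →
      (∃ α > 0, Integrable (fun x => φ (α * |f x|)) μ) →
      Tendsto (fun n => luxNorm μ φ (fun x => (μ[f | 𝒜 n]) x - f x)) atTop (𝓝 0)) :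
    ∀ D : Set Ω, MeasurableSet[𝔇] D → ∃ As : ℕ → Set Ω,
      (∀ n, MeasurableSet[𝒜 n] (As n)) ∧
      Tendsto (fun n => μ (symmDiff (As n) D)) atTop (𝓝 0) := by
  intro D hD
  have hDm : MeasurableSet[m0] D := h𝔇 D hD
  have hfsm : StronglyMeasurable[𝔇] (D.indicator (fun _ => (1:ℝ))) :=
    (@stronglyMeasurable_const Ω ℝ 𝔇 _ 1).indicator hD
  exact key_lemma μ hφ 𝒜 h𝒜 hDm
    (hcv _ hfsm (indicator_phi_integrable μ hφ hDm))
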